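/- Let q : (X, ∂, ξ) → (X', ∂', ξ') be a surjective morphism of precrossed B-modules of Lie algebras over a field k, and let M, N be B-invariant Lie subalgebras of X. Then the image under q of the Peiffer commutator is the Peiffer commutator of the images: q⟨M, N⟩ = ⟨q(M), q(N)⟩ as Lie ideals of X'. -/

import Mathlib

variable {k : Type*} [Field k]
variable {B X Y : Type*} [LieRing B] [LieAlgebra k B]
  [LieRing X] [LieAlgebra k X] [LieRing Y] [LieAlgebra k Y]

/-- `(X, δ, ξ)` is a precrossed `B`-module of Lie algebras:
`ξ : B → Der(X)` is an action by derivations and `δ (ξ b x) = ⁅b, δ x⁆`. -/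
def IsLiePrecrossedMod (δ : X →ₗ⁅k⁆ B) (ξ : B →ₗ⁅k⁆ LieDerivation k X X) : Prop :=
  ∀ (b : B) (x : X), δ (ξ b x) = ⁅b, δ x⁆

/-- A `B`-invariant set of elements of `X`. -/
def IsLieBInvariant (ξ : B →ₗ⁅k⁆ LieDerivation k X X) (M : Set X) : Prop :=
  ∀ (b : B), ∀ m ∈ M, ξ b m ∈ M

/-- The Peiffer commutator `⟨M, N⟩`: the Lie ideal of `X` generated by the Peiffer
elements `⁅m, n⁆ - ξ (δ m) n` and `⁅n, m⁆ - ξ (δ n) m` for `m ∈ M`, `n ∈ N`. -/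
def liePeiffer (δ : X →ₗ⁅k⁆ B) (ξ : B →ₗ⁅k⁆ LieDerivation k X X) (M N : Set X) :
    LieIdeal k X :=
  LieSubmodule.lieSpan k X
    ({y | ∃ m ∈ M, ∃ n ∈ N, y = ⁅m, n⁆ - ξ (δ m) n} ∪
     {y | ∃ m ∈ M, ∃ n ∈ N, y = ⁅n, m⁆ - ξ (δ n) m})

/-- `f` is a morphism of precrossed `B`-modules of Lie algebras. -/
def IsLiePXModHom (δ : X →ₗ⁅k⁆ B) (ξ : B →ₗ⁅k⁆ LieDerivation k X X)
    (δ' : Y →ₗ⁅k⁆ B) (ξ' : B →ₗ⁅k⁆ LieDerivation k Y Y) (f : X →ₗ⁅k⁆ Y) : Prop :=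
  (∀ x : X, δ' (f x) = δ x) ∧ ∀ (b : B) (x : X), f (ξ b x) = ξ' b (f x)

/-- the Peiffer commutator of precrossed `B`-modules of Lie algebras is
preserved by regular images: for a surjective morphism `q : X → X'` and `B`-invariant
Lie subalgebras `M, N` of `X`, `q⟨M, N⟩ = ⟨q(M), q(N)⟩`. -/
theorem liePeiffer_map
    (δ : X →ₗ⁅k⁆ B) (ξ : B →ₗ⁅k⁆ LieDerivation k X X) (hpre : IsLiePrecrossedMod δ ξ)
    (δ' : Y →ₗ⁅k⁆ B) (ξ' : B →ₗ⁅k⁆ LieDerivation k Y Y) (hpre' : IsLiePrecrossedMod δ' ξ')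
    (q : X →ₗ⁅k⁆ Y) (hq : Function.Surjective q) (hqhom : IsLiePXModHom δ ξ δ' ξ' q)
    (M N : LieSubalgebra k X)
    (hM : IsLieBInvariant ξ (M : Set X)) (hN : IsLieBInvariant ξ (N : Set X)) :
    LieIdeal.map q (liePeiffer δ ξ (M : Set X) (N : Set X)) =
      liePeiffer δ' ξ' (q '' (M : Set X)) (q '' (N : Set X)) := by
  obtain ⟨hδ, hξ⟩ := hqhom
  have key : ∀ (m n : X), q (⁅m, n⁆ - ξ (δ m) n) = ⁅q m, q n⁆ - ξ' (δ' (q m)) (q n) := by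
    intro m n
    rw [map_sub, LieHom.map_lie, hξ, hδ]
  apply le_antisymm
  · rw [LieIdeal.map_le_iff_le_comap, liePeiffer, LieSubmodule.lieSpan_le]
    rintro x (⟨m, hm, n, hn, rfl⟩ | ⟨m, hm, n, hn, rfl⟩) <;>
      simp only [SetLike.mem_coe, LieIdeal.mem_comap]
    · rw [key m n]
      exact LieSubmodule.subset_lieSpan (Or.inl ⟨q m, ⟨m, hm, rfl⟩, q n, ⟨n, hn, rfl⟩, rfl⟩)
    · rw [key n m]
      exact LieSubmodule.subset_lieSpan (Or.inr ⟨q m, ⟨m, hm, rfl⟩, q n, ⟨n, hn, rfl⟩, rfl⟩)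
  · rw [liePeiffer, LieSubmodule.lieSpan_le]
    rintro x (⟨_, ⟨m, hm, rfl⟩, _, ⟨n, hn, rfl⟩, rfl⟩ | ⟨_, ⟨m, hm, rfl⟩, _, ⟨n, hn, rfl⟩, rfl⟩)
    · rw [← key m n]
      exact LieIdeal.mem_map (LieSubmodule.subset_lieSpan (Or.inl ⟨m, hm, n, hn, rfl⟩))
    · rw [← key n m]
      exact LieIdeal.mem_map (LieSubmodule.subset_lieSpan (Or.inr ⟨m, hm, n, hn, rfl⟩))
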